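/- arXiv:1512.08691 — 3 statements merged into one kernel-verified Lean document; each statement's English description precedes it below -/
import Mathlib

section
/- (Mazur's lemma, pointwise version) Let X be a compact topological space and let (f_n) be a norm-bounded sequence in C(X) converging pointwise to a continuous function f ∈ C(X). Then there exists a sequence (g_n) with g_n ∈ conv({f_k : k ≥ n}) for each n such that (g_n) converges to f uniformly on X (i.e., in the supremum norm). -/
open Filter Topology

/-- An infinite convex combination of elements of a closed convex set (with bounded
elements, in a complete space) belongs to the set. -/
lemma tsum_mem_closedConvex {E : Type*} [NormedAddCommGroup E] [NormedSpace ℝ E]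
    [CompleteSpace E] {K : Set E} (hconv : Convex ℝ K) (hcl : IsClosed K)
    {a : ℕ → ℝ} (ha0 : ∀ k, 0 ≤ a k) (hasum : HasSum a 1)
    {y : ℕ → E} (hy : ∀ k, y k ∈ K) {M : ℝ} (hMy : ∀ k, ‖y k‖ ≤ M) :
    (∑' k, a k • y k) ∈ K := by
  have hsummable : Summable (fun k => a k • y k) := by
    refine Summable.of_norm_bounded (hasum.summable.mul_right M) ?_
    intro k
    rw [norm_smul, Real.norm_eq_abs, abs_of_nonneg (ha0 k)]
    exact mul_le_mul_of_nonneg_left (hMy k) (ha0 k)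
  have hS : Tendsto (fun Q => ∑ k ∈ Finset.range Q, a k • y k) atTop
      (𝓝 (∑' k, a k • y k)) := hsummable.hasSum.tendsto_sum_nat
  have hm : Tendsto (fun Q => ∑ k ∈ Finset.range Q, a k) atTop (𝓝 1) :=
    hasum.tendsto_sum_nat
  have hminv : Tendsto (fun Q => (∑ k ∈ Finset.range Q, a k)⁻¹) atTop (𝓝 1) := by
    simpa using hm.inv₀ one_ne_zero
  have hz : Tendsto (fun Q => (∑ k ∈ Finset.range Q, a k)⁻¹ • ∑ k ∈ Finset.range Q, a k • y k)
      atTop (𝓝 (∑' k, a k • y k)) := by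
    simpa using hminv.smul hS
  have hpos : ∀ᶠ Q in atTop, 0 < ∑ k ∈ Finset.range Q, a k :=
    hm.eventually (eventually_gt_nhds one_pos)
  refine hcl.mem_of_tendsto hz ?_
  filter_upwards [hpos] with Q hQ
  have : (∑ k ∈ Finset.range Q, a k)⁻¹ • ∑ k ∈ Finset.range Q, a k • y k
      = ∑ k ∈ Finset.range Q, ((∑ j ∈ Finset.range Q, a j)⁻¹ * a k) • y k := by
    rw [Finset.smul_sum]; simp [smul_smul]
  rw [this]
  refine hconv.sum_mem (fun k _ => mul_nonneg (inv_nonneg.2 hQ.le) (ha0 k)) ?_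
    (fun k _ => hy k)
  rw [← Finset.mul_sum, inv_mul_cancel₀ hQ.ne']

/-- Core lemma (Simons' inequality argument): a uniformly bounded sequence in `C(X)`,
`X` compact nonempty, tending pointwise to `0`, has convex combinations from every tail
of arbitrarily small norm. -/
lemma core_simons {X : Type*} [TopologicalSpace X] [CompactSpace X] [Nonempty X]
    (f : ℕ → C(X, ℝ)) (M : ℝ) (hM : ∀ j, ‖f j‖ ≤ M)
    (h0 : ∀ x : X, Tendsto (fun j => f j x) atTop (𝓝 0))
    (n : ℕ) {ε : ℝ} (hε : 0 < ε) :
    ∃ w ∈ convexHull ℝ {u : C(X, ℝ) | ∃ k, n ≤ k ∧ u = f k}, ‖w‖ < ε := by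
  classical
  set δ : ℝ := ε / 4 with hδdef
  have hδ : 0 < δ := by positivity
  set T : ℕ → Set C(X, ℝ) := fun p => {u : C(X, ℝ) | ∃ k, p ≤ k ∧ u = f k} with hT
  set K : ℕ → Set C(X, ℝ) := fun p => closure (convexHull ℝ (T p)) with hK
  have hKne : ∀ p, f p ∈ K p := fun p =>
    subset_closure (subset_convexHull ℝ _ ⟨p, le_rfl, rfl⟩)
  have hKconv : ∀ p, Convex ℝ (K p) := fun p => (convex_convexHull ℝ _).closure
  have hKcl : ∀ p, IsClosed (K p) := fun p => isClosed_closure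
  have hKmono : ∀ p q, p ≤ q → K q ⊆ K p := by
    intro p q hpq
    exact closure_mono (convexHull_mono (fun u ⟨k, hk, e⟩ => ⟨k, hpq.trans hk, e⟩))
  have hKbd : ∀ p, ∀ u ∈ K p, ‖u‖ ≤ M := by
    intro p u hu
    have : K p ⊆ Metric.closedBall 0 M := by
      refine closure_minimal (convexHull_min ?_ (convex_closedBall 0 M))
        Metric.isClosed_closedBall
      rintro v ⟨k, -, rfl⟩
      rw [mem_closedBall_zero_iff]
      exact hM k
    exact mem_closedBall_zero_iff.1 (this hu)
  -- near-optimal choice in each K q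
  have key : ∀ (v : C(X, ℝ)) (p q : ℕ), ∃ x, x ∈ K q ∧ ∀ u ∈ K q,
      ‖v + ((2:ℝ)⁻¹) ^ p • x‖ ≤ ‖v + ((2:ℝ)⁻¹) ^ p • u‖ + δ * ((4:ℝ)⁻¹) ^ p := by
    intro v p q
    set S : Set ℝ := (fun u => ‖v + ((2:ℝ)⁻¹) ^ p • u‖) '' K q with hSdef
    have hSne : S.Nonempty := ⟨_, ⟨f q, hKne q, rfl⟩⟩
    have hSbd : BddBelow S := ⟨0, fun r ⟨u, _, hu⟩ => hu ▸ norm_nonneg _⟩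
    have hlt : sInf S < sInf S + δ * ((4:ℝ)⁻¹) ^ p := by
      have : (0:ℝ) < δ * ((4:ℝ)⁻¹) ^ p := by positivity
      linarith
    obtain ⟨r, ⟨x, hxK, rfl⟩, hr⟩ := exists_lt_of_csInf_lt hSne hlt
    refine ⟨x, hxK, fun u hu => ?_⟩
    have : sInf S ≤ ‖v + ((2:ℝ)⁻¹) ^ p • u‖ := csInf_le hSbd ⟨u, hu, rfl⟩
    linarith
  choose ξ hξmem hξopt using key
  -- the recursive construction
  set H : ℕ → C(X, ℝ) := fun m =>
    Nat.rec (motive := fun _ => C(X, ℝ)) 0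
      (fun p hp => hp + ((2:ℝ)⁻¹) ^ (p + 1) • ξ hp (p + 1) (n + p + 1)) m with hHdef
  set x : ℕ → C(X, ℝ) := fun p => ξ (H p) (p + 1) (n + p + 1) with hxdef
  have hH0 : H 0 = 0 := rfl
  have hHs : ∀ p, H (p + 1) = H p + ((2:ℝ)⁻¹) ^ (p + 1) • x p := fun p => rfl
  have hxmem : ∀ p, x p ∈ K (n + p + 1) := fun p => hξmem _ _ _
  have hxopt : ∀ p, ∀ u ∈ K (n + p + 1),
      ‖H p + ((2:ℝ)⁻¹) ^ (p + 1) • x p‖ ≤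
        ‖H p + ((2:ℝ)⁻¹) ^ (p + 1) • u‖ + δ * ((4:ℝ)⁻¹) ^ (p + 1) :=
    fun p => hξopt _ _ _
  have hxbd : ∀ p, ‖x p‖ ≤ M := fun p => hKbd _ _ (hxmem p)
  -- geometric weights
  set a : ℕ → ℝ := fun k => ((2:ℝ)⁻¹) ^ (k + 1) with hadef
  have ha0 : ∀ k, 0 ≤ a k := fun k => by positivity
  have hasum : HasSum a 1 := by
    have h := hasSum_geometric_of_lt_one (by norm_num : (0:ℝ) ≤ 2⁻¹) (by norm_num)
    have h2 := h.const_smul ((2:ℝ)⁻¹)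
    have : ((2:ℝ)⁻¹ • (1 - 2⁻¹)⁻¹ : ℝ) = 1 := by norm_num
    rw [this] at h2
    refine h2.congr_fun fun k => ?_
    simp [hadef, pow_succ, mul_comm, smul_eq_mul]
  have hsummable : ∀ p, Summable (fun k => a k • x (k + p)) := by
    intro p
    refine Summable.of_norm_bounded (hasum.summable.mul_right M) ?_
    intro k
    have hns := norm_smul (a k) (x (k + p))
    rw [Real.norm_eq_abs, abs_of_nonneg (ha0 k)] at hns
    calc ‖a k • x (k + p)‖ = a k * ‖x (k + p)‖ := hns
      _ ≤ a k * M := mul_le_mul_of_nonneg_left (hxbd _) (ha0 k)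
  set t : ℕ → C(X, ℝ) := fun p => ∑' k, a k • x (k + p) with htdef
  have htmem : ∀ p, t p ∈ K (n + p + 1) := by
    intro p
    refine tsum_mem_closedConvex (hKconv _) (hKcl _) ha0 hasum
      (fun k => hKmono _ _ (by omega) (hxmem (k + p))) (fun k => hxbd _)
  -- partial sums
  have hHsum : ∀ p, H p = ∑ k ∈ Finset.range p, a k • x k := by
    intro p
    induction p with
    | zero => simp [hH0]
    | succ p ih => rw [hHs p, ih, Finset.sum_range_succ]
  -- tail identity : w = H p + 2⁻ᵖ • t p
  set w : C(X, ℝ) := t 0 with hwdef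
  have hti : ∀ p, w = H p + ((2:ℝ)⁻¹) ^ p • t p := by
    intro p
    have h1 : HasSum (fun k => a k • x (k + p)) (t p) := (hsummable p).hasSum
    have h2 : HasSum (fun k => ((2:ℝ)⁻¹) ^ p • (a k • x (k + p)))
        (((2:ℝ)⁻¹) ^ p • t p) := h1.const_smul _
    have h3 : HasSum (fun k => a (k + p) • x (k + p)) (((2:ℝ)⁻¹) ^ p • t p) := by
      refine h2.congr_fun fun k => ?_
      rw [smul_smul]
      congr 1
      simp only [hadef]
      rw [← pow_add]
      ring_nf
    have h4 : HasSum (fun k => a k • x k)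
        ((((2:ℝ)⁻¹) ^ p • t p) + ∑ k ∈ Finset.range p, a k • x k) :=
      (hasSum_nat_add_iff p).1 h3
    have h5 : HasSum (fun k => a k • x (k + 0)) w := (hsummable 0).hasSum
    have h6 : HasSum (fun k => a k • x k) w := by simpa using h5
    have := h6.unique h4
    rw [this, hHsum p, add_comm]
  set s : ℕ → ℝ := fun p => ‖H p‖ with hsdef
  set S : ℝ := ‖w‖ with hSdef
  -- recursion
  have hrec : ∀ p, s (p + 1) ≤ 2⁻¹ * s p + 2⁻¹ * S + δ * ((4:ℝ)⁻¹) ^ (p + 1) := by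
    intro p
    have h1 : s (p + 1) ≤ ‖H p + ((2:ℝ)⁻¹) ^ (p + 1) • t p‖ + δ * ((4:ℝ)⁻¹) ^ (p + 1) := by
      have := hxopt p (t p) (htmem p)
      rw [hsdef]
      simp only
      rw [hHs p]
      exact this
    have h2 : H p + ((2:ℝ)⁻¹) ^ (p + 1) • t p = (2:ℝ)⁻¹ • (H p + w) := by
      rw [hti p, pow_succ]
      rw [smul_add, smul_add]
      rw [smul_smul]
      rw [mul_comm]
      module
    have h3 : ‖H p + ((2:ℝ)⁻¹) ^ (p + 1) • t p‖ ≤ 2⁻¹ * s p + 2⁻¹ * S := by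
      rw [h2]
      have hns := norm_smul ((2:ℝ)⁻¹) (H p + w)
      have hn : ‖(2:ℝ)⁻¹‖ = (2⁻¹ : ℝ) := by norm_num
      rw [hn] at hns
      have hadd : ‖H p + w‖ ≤ s p + S := norm_add_le _ _
      rw [hns]
      nlinarith [hadd]
    linarith
  -- main estimate : S - s p ≥ 2⁻ᵖ (S - δ)
  have hG : ∀ p, s p ≤ (1 - ((2:ℝ)⁻¹) ^ p) * S
      + δ * (((2:ℝ)⁻¹) ^ p - ((4:ℝ)⁻¹) ^ p) := by
    intro p
    induction p with
    | zero => simp [hsdef, hH0]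
    | succ p ih =>
      have h1 := hrec p
      rw [pow_succ] at h1
      rw [pow_succ, pow_succ]
      linarith [ih, h1]
  have hmain : ∀ p, ((2:ℝ)⁻¹) ^ p * (S - δ) ≤ S - s p := by
    intro p
    have h1 := hG p
    have h2 : 0 ≤ δ * ((4:ℝ)⁻¹) ^ p :=
      mul_nonneg hδ.le (pow_nonneg (by norm_num) p)
    nlinarith [h1, h2]
  -- maximizing point
  obtain ⟨b, -, hb⟩ := isCompact_univ.exists_isMaxOn (f := fun y => |w y|)
    Set.univ_nonempty (by fun_prop)
  have hwb : S = |w b| := by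
    refine le_antisymm ?_ ?_
    · exact (ContinuousMap.norm_le _ (abs_nonneg _)).2 fun y => hb (Set.mem_univ y)
    · simpa [hSdef] using w.norm_coe_le_norm b
  -- the sign
  obtain ⟨σ, hσw, hσ1⟩ : ∃ σ : ℝ, σ * w b = S ∧ (σ = 1 ∨ σ = -1) := by
    rcases abs_cases (w b) with ⟨h1, -⟩ | ⟨h1, -⟩
    · exact ⟨1, by rw [hwb, h1, one_mul], Or.inl rfl⟩
    · exact ⟨-1, by rw [hwb, h1]; ring, Or.inr rfl⟩
  have hσle : ∀ r : ℝ, σ * r ≤ |r| := by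
    intro r
    rcases hσ1 with rfl | rfl
    · rw [one_mul]; exact le_abs_self r
    · rw [neg_one_mul]; exact neg_le_abs r
  -- pointwise convergence at b
  have hevb : ∀ᶠ j in atTop, |f j b| < δ := by
    have h := Metric.tendsto_nhds.mp (h0 b) δ hδ
    simpa [Real.dist_eq] using h
  obtain ⟨N, hN⟩ := eventually_atTop.1 hevb
  -- all of K (n+N+1) satisfies σ * u b ≤ δ
  have hhalf : ∀ u ∈ K (n + N + 1), σ * u b ≤ δ := by
    intro u hu
    set C : Set C(X, ℝ) := {v : C(X, ℝ) | σ * v b ≤ δ} with hCdef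
    have hCcl : IsClosed C := by
      have hcont : Continuous fun v : C(X, ℝ) => σ * v b :=
        continuous_const.mul (continuous_eval_const b)
      exact isClosed_Iic.preimage hcont
    have hCconv : Convex ℝ C := by
      intro u1 hu1 u2 hu2 α β hα hβ hαβ
      simp only [hCdef, Set.mem_setOf_eq] at hu1 hu2 ⊢
      have : (α • u1 + β • u2) b = α * u1 b + β * u2 b := by
        simp [ContinuousMap.add_apply]
      rw [this]
      nlinarith
    have hTC : T (n + N + 1) ⊆ C := by
      rintro v ⟨k, hk, rfl⟩
      have : |f k b| < δ := hN k (by omega)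
      exact le_trans (hσle _) this.le
    exact closure_minimal (convexHull_min hTC hCconv) hCcl hu
  -- conclude S ≤ 2δ
  have hSle : S ≤ 2 * δ := by
    have h1 : σ * (t N) b ≤ δ := hhalf _ (htmem N)
    have h2 : σ * w b = σ * (H N) b + ((2:ℝ)⁻¹) ^ N * (σ * (t N) b) := by
      rw [hti N]
      have : (H N + ((2:ℝ)⁻¹) ^ N • t N) b = (H N) b + ((2:ℝ)⁻¹) ^ N * (t N) b := by
        simp
      rw [this]; ring
    have h3 : σ * (H N) b ≤ s N := le_trans (hσle _)
      (by simpa [hsdef] using (H N).norm_coe_le_norm b)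
    have h4 := hmain N
    have hq0 : (0:ℝ) < ((2:ℝ)⁻¹) ^ N := by positivity
    -- σ w b = S, so 2⁻ᴺ (σ t N b) = S - σ H N b ≥ S - s N ≥ 2⁻ᴺ (S - δ)
    have h5 : ((2:ℝ)⁻¹) ^ N * (S - δ) ≤ ((2:ℝ)⁻¹) ^ N * (σ * (t N) b) := by
      rw [hσw] at h2
      linarith
    have h6 : S - δ ≤ σ * (t N) b := le_of_mul_le_mul_left h5 hq0
    linarith
  -- w ∈ K (n+1) ⊆ K n, and pick a hull element close to w
  have hwK : w ∈ K n := by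
    have : w ∈ K (n + 0 + 1) := by
      rw [hti 0] at *
      have := htmem 0
      simpa [hH0] using this
    exact hKmono n (n + 0 + 1) (by omega) this
  have hwnorm : ‖w‖ ≤ ε / 2 := by
    rw [← hSdef]
    rw [hδdef] at hSle
    linarith
  obtain ⟨h, hhmem, hhd⟩ := Metric.mem_closure_iff.1 hwK (ε / 4) (by positivity)
  refine ⟨h, hhmem, ?_⟩
  have h7 : ‖h‖ ≤ ‖w‖ + ‖h - w‖ := by
    calc ‖h‖ = ‖w + (h - w)‖ := by congr 1; abel
      _ ≤ ‖w‖ + ‖h - w‖ := norm_add_le _ _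
  have h8 : ‖h - w‖ < ε / 4 := by
    rw [← dist_eq_norm, dist_comm]
    exact hhd
  linarith

/-- Mazur's lemma (pointwise version): if a norm-bounded sequence `(f_n)` in
`C(X)` (`X` compact) converges pointwise to a continuous function `f`, then
there are `g_n ∈ conv{f_k : k ≥ n}` converging to `f` uniformly. -/
theorem mazur_lemma_pointwise {X : Type*} [TopologicalSpace X] [CompactSpace X]
    (f : ℕ → C(X, ℝ)) (g : C(X, ℝ))
    (hbdd : ∃ r : ℝ, ∀ n : ℕ, ∀ x : X, |f n x| ≤ r)
    (hconv : ∀ x : X, Tendsto (fun n => f n x) atTop (𝓝 (g x))) :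
    ∃ h : ℕ → C(X, ℝ),
      (∀ n, h n ∈ convexHull ℝ {u : C(X, ℝ) | ∃ k, n ≤ k ∧ u = f k}) ∧
      TendstoUniformly (fun n => ⇑(h n)) (⇑g) atTop := by
  rcases isEmpty_or_nonempty X with hX | hX
  · refine ⟨f, fun n => subset_convexHull ℝ _ ⟨n, le_rfl, rfl⟩, ?_⟩
    rw [Metric.tendstoUniformly_iff]
    intro ε hε
    filter_upwards with n x
    exact (IsEmpty.false x).elim
  · obtain ⟨r, hr⟩ := hbdd
    set f' : ℕ → C(X, ℝ) := fun j => f j - g with hf'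
    have hr0 : 0 ≤ r := le_trans (abs_nonneg _) (hr 0 (Classical.arbitrary X))
    have hM : ∀ j, ‖f' j‖ ≤ r + ‖g‖ := by
      intro j
      have h1 : ‖f j‖ ≤ r := (ContinuousMap.norm_le _ hr0).2 fun x => hr j x
      calc ‖f' j‖ ≤ ‖f j‖ + ‖g‖ := norm_sub_le _ _
        _ ≤ r + ‖g‖ := by linarith
    have h0 : ∀ x : X, Tendsto (fun j => f' j x) atTop (𝓝 0) := by
      intro x
      have := (hconv x).sub_const (g x)
      simpa [hf'] using this
    have hex : ∀ n : ℕ, ∃ w ∈ convexHull ℝ {u : C(X, ℝ) | ∃ k, n ≤ k ∧ u = f' k},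
        ‖w‖ < 1 / (n + 1) := by
      intro n
      exact core_simons f' (r + ‖g‖) hM h0 n (by positivity)
    choose w hwmem hwnorm using hex
    refine ⟨fun n => w n + g, ?_, ?_⟩
    · intro n
      set τ : C(X, ℝ) ≃ᵃ[ℝ] C(X, ℝ) := AffineEquiv.constVAdd ℝ C(X, ℝ) g with hτ
      have hτapp : ∀ u : C(X, ℝ), τ u = g + u := fun u => rfl
      have himg : τ '' {u : C(X, ℝ) | ∃ k, n ≤ k ∧ u = f' k}
          = {u : C(X, ℝ) | ∃ k, n ≤ k ∧ u = f k} := by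
        ext u
        constructor
        · rintro ⟨v, ⟨k, hk, rfl⟩, rfl⟩
          refine ⟨k, hk, ?_⟩
          rw [hτapp]
          simp [hf']
        · rintro ⟨k, hk, rfl⟩
          refine ⟨f' k, ⟨k, hk, rfl⟩, ?_⟩
          rw [hτapp]
          simp [hf']
      have hmem := Set.mem_image_of_mem τ (hwmem n)
      have him2 := τ.toAffineMap.image_convexHull {u : C(X, ℝ) | ∃ k, n ≤ k ∧ u = f' k}
      rw [AffineEquiv.coe_toAffineMap] at him2
      rw [him2, himg] at hmem
      have heq : τ (w n) = w n + g := by rw [hτapp]; abel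
      show w n + g ∈ _
      rwa [heq] at hmem
    · rw [Metric.tendstoUniformly_iff]
      intro ε hε
      have h1 : Tendsto (fun n : ℕ => 1 / ((n:ℝ) + 1)) atTop (𝓝 0) :=
        tendsto_one_div_add_atTop_nhds_zero_nat
      have h2 : ∀ᶠ n : ℕ in atTop, 1 / ((n:ℝ) + 1) < ε :=
        h1.eventually (eventually_lt_nhds hε)
      filter_upwards [h2] with n hn x
      have h3 : dist (g x) ((w n + g) x) = |w n x| := by
        rw [Real.dist_eq]
        simp [abs_sub_comm]
      rw [h3]
      calc |w n x| ≤ ‖w n‖ := by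
            simpa using (w n).norm_coe_le_norm x
        _ < 1 / (n + 1) := hwnorm n
        _ < ε := hn
end

section
/- (Rosenthal's ℓ¹ dichotomy) Let E be a real Banach space and let (x_n) be a bounded sequence in E. Then either (x_n) has a weakly Cauchy subsequence, or (x_n) has a subsequence (x_{n_k}) equivalent to the unit vector basis of ℓ¹, i.e., there exists δ > 0 such that for every finitely supported sequence of reals (a_k), δ · ∑_k |a_k| ≤ ‖∑_k a_k x_{n_k}‖. -/
open Filter Topology

namespace RosenthalNW

/-- `τ` is a (finite) initial segment of the set `Q`. -/
def IsInitSeg (τ : Finset ℕ) (Q : Set ℕ) : Prop :=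
  ↑τ ⊆ Q ∧ ∀ a ∈ Q, a ∉ τ → ∀ b ∈ τ, b < a

variable (Bad : Finset ℕ → Prop)

def Accepts (σ : Finset ℕ) (M : Set ℕ) : Prop :=
  ∀ Q : Set ℕ, Q ⊆ M → Q.Infinite → ∃ τ : Finset ℕ, IsInitSeg τ Q ∧ Bad (σ ∪ τ)

def Rejects (σ : Finset ℕ) (M : Set ℕ) : Prop :=
  ∀ M' : Set ℕ, M' ⊆ M → M'.Infinite → ¬ Accepts Bad σ M'

variable {Bad}

lemma Accepts.mono {σ : Finset ℕ} {M M' : Set ℕ} (h : Accepts Bad σ M) (hsub : M' ⊆ M) :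
    Accepts Bad σ M' := fun Q hQ hQi => h Q (hQ.trans hsub) hQi

lemma Rejects.mono {σ : Finset ℕ} {M M' : Set ℕ} (h : Rejects Bad σ M) (hsub : M' ⊆ M) :
    Rejects Bad σ M' := fun T hT hTi => h T (hT.trans hsub) hTi

lemma Rejects.not_accepts {σ : Finset ℕ} {M : Set ℕ} (h : Rejects Bad σ M) (hM : M.Infinite) :
    ¬ Accepts Bad σ M := h M (subset_refl M) hM

lemma accepts_of_bad {σ : Finset ℕ} {M : Set ℕ} (h : Bad σ) : Accepts Bad σ M := by
  intro Q _hQ hQi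
  refine ⟨∅, ⟨by simp, by simp⟩, by simpa using h⟩

variable (Bad)

lemma decide_many (𝒮 : Finset (Finset ℕ)) (M : Set ℕ) (hM : M.Infinite) :
    ∃ M', M' ⊆ M ∧ M'.Infinite ∧ ∀ σ ∈ 𝒮, Accepts Bad σ M' ∨ Rejects Bad σ M' := by
  classical
  induction 𝒮 using Finset.induction_on with
  | empty => exact ⟨M, subset_refl M, hM, by simp⟩
  | @insert σ 𝒮 hσ ih =>
    obtain ⟨M₁, hM₁sub, hM₁inf, hM₁dec⟩ := ih
    by_cases hacc : ∃ M₂, M₂ ⊆ M₁ ∧ M₂.Infinite ∧ Accepts Bad σ M₂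
    · obtain ⟨M₂, h1, h2, h3⟩ := hacc
      refine ⟨M₂, (h1.trans hM₁sub), h2, ?_⟩
      intro σ' hσ'
      rcases Finset.mem_insert.mp hσ' with rfl | hmem
      · exact Or.inl h3
      · rcases hM₁dec σ' hmem with h | h
        · exact Or.inl (h.mono h1)
        · exact Or.inr (h.mono h1)
    · have hrej : Rejects Bad σ M₁ := by
        intro M' h1 h2 h3; exact hacc ⟨M', h1, h2, h3⟩
      refine ⟨M₁, hM₁sub, hM₁inf, ?_⟩
      intro σ' hσ'
      rcases Finset.mem_insert.mp hσ' with rfl | hmem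
      · exact Or.inr hrej
      · exact hM₁dec σ' hmem

structure NWSt (Bad : Finset ℕ → Prop) where
  A : Finset ℕ
  M : Set ℕ
  hM : M.Infinite
  hlt : ∀ a ∈ A, ∀ m ∈ M, a < m
  hdec : ∀ σ ∈ A.powerset, Accepts Bad σ M ∨ Rejects Bad σ M

noncomputable def pick (s : NWSt Bad) : ℕ := s.hM.nonempty.choose

lemma pick_mem (s : NWSt Bad) : pick Bad s ∈ s.M := s.hM.nonempty.choose_spec

lemma step_ex (s : NWSt Bad) : ∃ s' : NWSt Bad,
    s'.A = insert (pick Bad s) s.A ∧ s'.M ⊆ s.M ∧ ∀ m ∈ s'.M, pick Bad s < m := by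
  classical
  set n := pick Bad s with hn
  have hinf : (s.M ∩ Set.Ioi n).Infinite := by
    refine Set.Infinite.mono ?_ (s.hM.diff (Set.finite_Iic n))
    intro a ha
    exact ⟨ha.1, by simpa using ha.2⟩
  obtain ⟨M', h1, h2, h3⟩ := decide_many Bad (insert n s.A).powerset (s.M ∩ Set.Ioi n) hinf
  have hsubM : M' ⊆ s.M := h1.trans (Set.inter_subset_left)
  have hsubIoi : M' ⊆ Set.Ioi n := h1.trans (Set.inter_subset_right)
  refine ⟨⟨insert n s.A, M', h2, ?_, ?_⟩, rfl, hsubM, fun m hm => hsubIoi hm⟩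
  · intro a ha m hm
    rcases Finset.mem_insert.mp ha with rfl | ha'
    · exact hsubIoi hm
    · exact s.hlt a ha' m (hsubM hm)
  · intro σ hσ
    exact h3 σ hσ

variable (N₀ : Set ℕ) (hN₀ : N₀.Infinite) (hrej : Rejects Bad ∅ N₀)

noncomputable def st : ℕ → NWSt Bad
  | 0 => ⟨∅, N₀, hN₀, by simp, by
      intro σ hσ
      simp only [Finset.powerset_empty, Finset.mem_singleton] at hσ
      subst hσ
      exact Or.inr hrej⟩
  | (k+1) => (step_ex Bad (st k)).choose

noncomputable def idx (k : ℕ) : ℕ := pick Bad (st Bad N₀ hN₀ hrej k)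

variable {Bad N₀}

lemma stA (k : ℕ) :
    (st Bad N₀ hN₀ hrej (k+1)).A = insert (idx Bad N₀ hN₀ hrej k) (st Bad N₀ hN₀ hrej k).A :=
  (step_ex Bad (st Bad N₀ hN₀ hrej k)).choose_spec.1

lemma stMsub (k : ℕ) : (st Bad N₀ hN₀ hrej (k+1)).M ⊆ (st Bad N₀ hN₀ hrej k).M :=
  (step_ex Bad (st Bad N₀ hN₀ hrej k)).choose_spec.2.1

lemma stMlt (k : ℕ) : ∀ m ∈ (st Bad N₀ hN₀ hrej (k+1)).M, idx Bad N₀ hN₀ hrej k < m :=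
  (step_ex Bad (st Bad N₀ hN₀ hrej k)).choose_spec.2.2

lemma idx_mem (k : ℕ) : idx Bad N₀ hN₀ hrej k ∈ (st Bad N₀ hN₀ hrej k).M :=
  pick_mem Bad _

lemma stM_chain {j k : ℕ} (h : j ≤ k) :
    (st Bad N₀ hN₀ hrej k).M ⊆ (st Bad N₀ hN₀ hrej j).M := by
  induction k with
  | zero => simpa [Nat.le_zero.mp h] using subset_refl _
  | succ k ih =>
    rcases Nat.lt_or_ge j (k+1) with hlt | hge
    · exact (stMsub hN₀ hrej k).trans (ih (Nat.lt_succ_iff.mp hlt))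
    · have : j = k + 1 := le_antisymm h hge
      subst this; exact subset_refl _

lemma idx_mem_of_le {j k : ℕ} (h : k ≤ j) :
    idx Bad N₀ hN₀ hrej j ∈ (st Bad N₀ hN₀ hrej k).M :=
  stM_chain hN₀ hrej h (idx_mem hN₀ hrej j)

lemma idx_strictMono : StrictMono (idx Bad N₀ hN₀ hrej) := by
  apply strictMono_nat_of_lt_succ
  intro k
  exact stMlt hN₀ hrej k _ (idx_mem hN₀ hrej (k+1))

lemma stA_eq (k : ℕ) :
    (st Bad N₀ hN₀ hrej k).A = (Finset.range k).image (idx Bad N₀ hN₀ hrej) := by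
  induction k with
  | zero => simp [st]
  | succ k ih =>
    rw [stA hN₀ hrej k, ih, Finset.range_add_one, Finset.image_insert]

lemma stA_mono {j k : ℕ} (h : j ≤ k) :
    (st Bad N₀ hN₀ hrej j).A ⊆ (st Bad N₀ hN₀ hrej k).A := by
  rw [stA_eq hN₀ hrej, stA_eq hN₀ hrej]
  exact Finset.image_subset_image (Finset.range_subset_range.mpr h)

lemma stM_in_N₀ (k : ℕ) : (st Bad N₀ hN₀ hrej k).M ⊆ N₀ := by
  have := stM_chain hN₀ hrej (Nat.zero_le k)
  simpa [st] using this

/-- The stable classification of finite subsets of the selected points. -/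
def AccCl (σ : Finset ℕ) : Prop :=
  ∃ k, σ ⊆ (st Bad N₀ hN₀ hrej k).A ∧ Accepts Bad σ (st Bad N₀ hN₀ hrej k).M

lemma accCl_iff {σ : Finset ℕ} {k : ℕ} (hσ : σ ⊆ (st Bad N₀ hN₀ hrej k).A) :
    AccCl hN₀ hrej σ ↔ Accepts Bad σ (st Bad N₀ hN₀ hrej k).M := by
  constructor
  · rintro ⟨t, _hσt, hacc⟩
    rcases le_or_gt t k with hle | hlt
    · exact hacc.mono (stM_chain hN₀ hrej hle)
    · rcases (st Bad N₀ hN₀ hrej k).hdec σ (Finset.mem_powerset.mpr hσ) with h | h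
      · exact h
      · exact absurd (hacc.mono (subset_refl _))
          ((h.mono (stM_chain hN₀ hrej hlt.le)).not_accepts (st Bad N₀ hN₀ hrej t).hM)
  · intro h; exact ⟨k, hσ, h⟩

lemma rejects_of_not_accCl {σ : Finset ℕ} {k : ℕ} (hσ : σ ⊆ (st Bad N₀ hN₀ hrej k).A)
    (h : ¬ AccCl hN₀ hrej σ) : Rejects Bad σ (st Bad N₀ hN₀ hrej k).M := by
  rcases (st Bad N₀ hN₀ hrej k).hdec σ (Finset.mem_powerset.mpr hσ) with h' | h'
  · exact absurd ((accCl_iff hN₀ hrej hσ).mpr h') h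
  · exact h'

lemma bad_accCl {σ : Finset ℕ} (hb : Bad σ) (hσ : ∃ k, σ ⊆ (st Bad N₀ hN₀ hrej k).A) :
    AccCl hN₀ hrej σ := by
  obtain ⟨k, hk⟩ := hσ
  exact ⟨k, hk, accepts_of_bad hb⟩

end RosenthalNW

namespace RosenthalNW

variable {Bad : Finset ℕ → Prop} {N₀ : Set ℕ} (hN₀ : N₀.Infinite) (hrej : Rejects Bad ∅ N₀)

/-- Key lemma: if `σ` is rejected, only finitely many one-point extensions by selected
points are accepted. -/
lemma accCl_insert_finite {σ : Finset ℕ} {k₀ : ℕ} (hσ : σ ⊆ (st Bad N₀ hN₀ hrej k₀).A)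
    (hna : ¬ AccCl hN₀ hrej σ) :
    {j : ℕ | AccCl hN₀ hrej (insert (idx Bad N₀ hN₀ hrej j) σ)}.Finite := by
  classical
  set n := idx Bad N₀ hN₀ hrej with hn
  have hsub : {j | AccCl hN₀ hrej (insert (n j) σ)} ⊆
      Set.Iio k₀ ∪ {j | k₀ ≤ j ∧ AccCl hN₀ hrej (insert (n j) σ)} := by
    intro j hj
    rcases lt_or_ge j k₀ with h | h
    · exact Or.inl h
    · exact Or.inr ⟨h, hj⟩
  refine Set.Finite.subset (Set.Finite.union (Set.finite_Iio k₀) ?_) hsub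
  by_contra hinf
  have hinf : {j | k₀ ≤ j ∧ AccCl hN₀ hrej (insert (n j) σ)}.Infinite := hinf
  set J := {j | k₀ ≤ j ∧ AccCl hN₀ hrej (insert (n j) σ)} with hJ
  set I : Set ℕ := n '' J with hI
  have hIinf : I.Infinite := hinf.image ((idx_strictMono hN₀ hrej).injective.injOn)
  have hIsub : I ⊆ (st Bad N₀ hN₀ hrej k₀).M := by
    rintro _ ⟨j, hj, rfl⟩
    exact idx_mem_of_le hN₀ hrej hj.1
  have hrejσ : Rejects Bad σ (st Bad N₀ hN₀ hrej k₀).M := rejects_of_not_accCl hN₀ hrej hσ hna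
  refine hrejσ I hIsub hIinf ?_
  -- show `Accepts Bad σ I`
  intro Q hQsub hQinf
  have hQne : Q.Nonempty := hQinf.nonempty
  set m₀ := sInf Q with hm₀
  have hm₀Q : m₀ ∈ Q := Nat.sInf_mem hQne
  obtain ⟨j, hjJ, hjm⟩ := hQsub hm₀Q
  have hins : insert m₀ σ ⊆ (st Bad N₀ hN₀ hrej (j+1)).A := by
    rw [← hjm]
    intro a ha
    rcases Finset.mem_insert.mp ha with rfl | ha'
    · rw [stA_eq hN₀ hrej]
      exact Finset.mem_image.mpr ⟨j, Finset.mem_range.mpr (Nat.lt_succ_self j), rfl⟩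
    · exact stA_mono hN₀ hrej (Nat.le_succ_of_le hjJ.1) (hσ ha')
  have hacc : Accepts Bad (insert m₀ σ) (st Bad N₀ hN₀ hrej (j+1)).M := by
    have := hjJ.2
    rw [← hjm] at *
    exact (accCl_iff hN₀ hrej hins).mp this
  have hQ'sub : Q \ {m₀} ⊆ (st Bad N₀ hN₀ hrej (j+1)).M := by
    rintro a ⟨haQ, hane⟩
    obtain ⟨j', hj'J, hj'm⟩ := hQsub haQ
    have hne : j' ≠ j := by
      intro h
      apply hane
      simp only [Set.mem_singleton_iff]
      rw [← hj'm, h, hjm]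
    have hle : m₀ ≤ a := Nat.sInf_le haQ
    have : j ≤ j' := by
      by_contra hcon
      push_neg at hcon
      have hmono := idx_strictMono hN₀ hrej hcon
      have : a < m₀ := by rw [← hj'm, ← hjm]; exact hmono
      omega
    have hjj' : j + 1 ≤ j' := lt_of_le_of_ne this (Ne.symm hne)
    rw [← hj'm]
    exact idx_mem_of_le hN₀ hrej hjj'
  have hQ'inf : (Q \ {m₀}).Infinite := hQinf.diff (Set.finite_singleton m₀)
  obtain ⟨τ, hτinit, hτbad⟩ := hacc (Q \ {m₀}) hQ'sub hQ'inf
  refine ⟨insert m₀ τ, ⟨?_, ?_⟩, ?_⟩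
  · rw [Finset.coe_insert]
    exact Set.insert_subset hm₀Q (hτinit.1.trans Set.diff_subset)
  · intro a haQ hanotin b hb
    rcases Finset.mem_insert.mp hb with rfl | hbτ
    · have : a ≠ m₀ := fun h => hanotin (h ▸ Finset.mem_insert_self _ _)
      have := Nat.sInf_le haQ
      omega
    · have haQ' : a ∈ Q \ {m₀} := ⟨haQ, fun h => hanotin (by
        simp only [Set.mem_singleton_iff] at h
        exact h ▸ Finset.mem_insert_self _ _)⟩
      exact hτinit.2 a haQ' (fun hc => hanotin (Finset.mem_insert_of_mem hc)) b hbτ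
  · have : σ ∪ insert m₀ τ = insert m₀ σ ∪ τ := by
      rw [Finset.union_insert, Finset.insert_union]
    rw [this]
    exact hτbad

lemma not_accCl_empty : ¬ AccCl hN₀ hrej (∅ : Finset ℕ) := by
  rintro ⟨k, _, hacc⟩
  exact (hrej.mono (stM_in_N₀ hN₀ hrej k)).not_accepts (st Bad N₀ hN₀ hrej k).hM hacc

/-- Selection step. -/
lemma sel_ex (C : Finset ℕ)
    (hC : ∀ σ : Finset ℕ, σ ⊆ C.image (idx Bad N₀ hN₀ hrej) → ¬ AccCl hN₀ hrej σ) :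
    ∃ j, (∀ c ∈ C, c < j) ∧
      ∀ σ : Finset ℕ, σ ⊆ (insert j C).image (idx Bad N₀ hN₀ hrej) → ¬ AccCl hN₀ hrej σ := by
  classical
  set n := idx Bad N₀ hN₀ hrej with hn
  obtain ⟨k₀, hk₀⟩ := Finset.exists_nat_subset_range C
  have hAk : C.image n ⊆ (st Bad N₀ hN₀ hrej k₀).A := by
    rw [stA_eq hN₀ hrej]
    exact Finset.image_subset_image hk₀
  have hfin : (⋃ σ ∈ (C.image n).powerset, {j | AccCl hN₀ hrej (insert (n j) σ)}).Finite := by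
    refine Set.Finite.biUnion (Finset.finite_toSet _) ?_
    intro σ hσ
    have hσ' : σ ⊆ C.image n := Finset.mem_powerset.mp (by exact_mod_cast hσ)
    exact accCl_insert_finite hN₀ hrej (hσ'.trans hAk) (hC σ hσ')
  obtain ⟨b, hb⟩ := hfin.bddAbove
  set j := b + (C.sup id) + 1 with hj
  refine ⟨j, ?_, ?_⟩
  · intro c hc
    have := Finset.le_sup (f := id) hc
    simp only [id_eq] at this
    omega
  · intro σ hσ
    by_cases hmem : n j ∈ σ
    · have herase : σ.erase (n j) ⊆ C.image n := by
        intro a ha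
        have h1 := Finset.mem_of_mem_erase ha
        have h2 := Finset.ne_of_mem_erase ha
        rcases Finset.mem_image.mp (hσ h1) with ⟨c, hc, rfl⟩
        rcases Finset.mem_insert.mp hc with rfl | hcC
        · exact absurd rfl h2
        · exact Finset.mem_image_of_mem n hcC
      have hjnot : j ∉ ⋃ σ' ∈ (C.image n).powerset, {j | AccCl hN₀ hrej (insert (n j) σ')} := by
        intro hcon
        have := hb hcon
        omega
      intro hacc
      refine hjnot ?_
      refine Set.mem_biUnion (Finset.mem_coe.mpr (Finset.mem_powerset.mpr herase)) ?_
      have : insert (n j) (σ.erase (n j)) = σ := Finset.insert_erase hmem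
      rw [Set.mem_setOf_eq, this]
      exact hacc
    · have : σ ⊆ C.image n := by
        intro a ha
        rcases Finset.mem_image.mp (hσ ha) with ⟨c, hc, rfl⟩
        rcases Finset.mem_insert.mp hc with rfl | hcC
        · exact absurd ha hmem
        · exact Finset.mem_image_of_mem n hcC
      exact hC σ this

end RosenthalNW

namespace RosenthalNW

variable {Bad : Finset ℕ → Prop} {N₀ : Set ℕ} (hN₀ : N₀.Infinite) (hrej : Rejects Bad ∅ N₀)

noncomputable def selSt : ℕ → {C : Finset ℕ //
    ∀ σ : Finset ℕ, σ ⊆ C.image (idx Bad N₀ hN₀ hrej) → ¬ AccCl hN₀ hrej σ}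
  | 0 => ⟨∅, by
      intro σ hσ
      simp only [Finset.image_empty, Finset.subset_empty] at hσ
      subst hσ
      exact not_accCl_empty hN₀ hrej⟩
  | (t+1) =>
    ⟨insert ((sel_ex hN₀ hrej (selSt t).1 (selSt t).2).choose) (selSt t).1,
      (sel_ex hN₀ hrej (selSt t).1 (selSt t).2).choose_spec.2⟩

noncomputable def selIdx (t : ℕ) : ℕ :=
  (sel_ex hN₀ hrej (selSt hN₀ hrej t).1 (selSt hN₀ hrej t).2).choose

lemma selSt_eq (t : ℕ) :
    (selSt hN₀ hrej (t+1)).1 = insert (selIdx hN₀ hrej t) (selSt hN₀ hrej t).1 := rfl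

lemma selIdx_gt (t : ℕ) : ∀ c ∈ (selSt hN₀ hrej t).1, c < selIdx hN₀ hrej t :=
  (sel_ex hN₀ hrej (selSt hN₀ hrej t).1 (selSt hN₀ hrej t).2).choose_spec.1

lemma selIdx_mem_succ (t : ℕ) : selIdx hN₀ hrej t ∈ (selSt hN₀ hrej (t+1)).1 := by
  rw [selSt_eq]; exact Finset.mem_insert_self _ _

lemma selSt_mono {s t : ℕ} (h : s ≤ t) : (selSt hN₀ hrej s).1 ⊆ (selSt hN₀ hrej t).1 := by
  induction t with
  | zero => simpa [Nat.le_zero.mp h] using subset_refl _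
  | succ t ih =>
    rcases Nat.lt_or_ge s (t+1) with hlt | hge
    · exact (ih (Nat.lt_succ_iff.mp hlt)).trans (by rw [selSt_eq]; exact Finset.subset_insert _ _)
    · have : s = t + 1 := le_antisymm h hge
      subst this; exact subset_refl _

lemma selIdx_strictMono : StrictMono (selIdx hN₀ hrej) := by
  apply strictMono_nat_of_lt_succ
  intro t
  exact selIdx_gt hN₀ hrej (t+1) _ (selIdx_mem_succ hN₀ hrej t)

/-- Open Nash–Williams-type dichotomy. -/
theorem nwOpen (Bad : Finset ℕ → Prop) (N₀ : Set ℕ) (hN₀ : N₀.Infinite) :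
    (∃ N', N' ⊆ N₀ ∧ N'.Infinite ∧
        ∀ Q : Set ℕ, Q ⊆ N' → Q.Infinite → ∃ τ : Finset ℕ, IsInitSeg τ Q ∧ Bad τ) ∨
      (∃ e : ℕ → ℕ, StrictMono e ∧ (∀ t, e t ∈ N₀) ∧
        ∀ F : Finset ℕ, ↑F ⊆ Set.range e → ¬ Bad F) := by
  classical
  by_cases hacc : ∃ M, M ⊆ N₀ ∧ M.Infinite ∧ Accepts Bad ∅ M
  · obtain ⟨M, h1, h2, h3⟩ := hacc
    left
    refine ⟨M, h1, h2, ?_⟩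
    intro Q hQ hQi
    obtain ⟨τ, hτi, hτb⟩ := h3 Q hQ hQi
    exact ⟨τ, hτi, by simpa using hτb⟩
  · have hrej : Rejects Bad ∅ N₀ := by
      intro M h1 h2 h3; exact hacc ⟨M, h1, h2, h3⟩
    right
    set n := idx Bad N₀ hN₀ hrej with hn
    set e : ℕ → ℕ := fun t => n (selIdx hN₀ hrej t) with he
    have hemono : StrictMono e :=
      (idx_strictMono hN₀ hrej).comp (selIdx_strictMono hN₀ hrej)
    refine ⟨e, hemono, ?_, ?_⟩
    · intro t
      exact stM_in_N₀ hN₀ hrej _ (idx_mem hN₀ hrej _)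
    · intro F hF
      -- find T with F ⊆ image n (selSt T)
      have hFsub : ∀ b ∈ F, ∃ t, e t = b := by
        intro b hb
        exact hF hb
      set T := F.sup (fun b => if h : ∃ t, e t = b then h.choose + 1 else 0) with hT
      have hFsub2 : F ⊆ ((selSt hN₀ hrej T).1).image n := by
        intro b hb
        have hex : ∃ t, e t = b := hFsub b hb
        have hchoose : e hex.choose = b := hex.choose_spec
        have hle : hex.choose + 1 ≤ T := by
          have := Finset.le_sup (f := fun b => if h : ∃ t, e t = b then h.choose + 1 else 0) hb
          rwa [dif_pos hex] at this
        have hmem : selIdx hN₀ hrej hex.choose ∈ (selSt hN₀ hrej T).1 :=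
          selSt_mono hN₀ hrej hle (selIdx_mem_succ hN₀ hrej hex.choose)
        exact Finset.mem_image.mpr ⟨_, hmem, hchoose⟩
      have hnacc : ¬ AccCl hN₀ hrej F := (selSt hN₀ hrej T).2 F hFsub2
      intro hbad
      refine hnacc (bad_accCl hN₀ hrej hbad ?_)
      obtain ⟨k', hk'⟩ := Finset.exists_nat_subset_range ((selSt hN₀ hrej T).1)
      refine ⟨k', ?_⟩
      refine hFsub2.trans ?_
      rw [stA_eq hN₀ hrej]
      exact Finset.image_subset_image hk'

end RosenthalNW

namespace RosenthalNW

lemma sort_initseg {g : ℕ → ℕ} (hg : StrictMono g) {τ : Finset ℕ}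
    (h : IsInitSeg τ (Set.range g)) :
    τ.sort (· ≤ ·) = List.map g (List.range τ.card) := by
  classical
  rcases Finset.eq_empty_or_nonempty τ with rfl | hne
  · simp
  -- downward closed index predicate
  have hDC : ∀ t t' : ℕ, t' ≤ t → g t ∈ τ → g t' ∈ τ := by
    intro t t' hle hmem
    by_contra hcon
    have := h.2 (g t') ⟨t', rfl⟩ hcon (g t) hmem
    exact absurd (hg.le_iff_le.mpr hle) (not_le.mpr this)
  have hbdd : ∃ t, g t ∉ τ := by
    refine ⟨τ.max' hne + 1, ?_⟩
    intro hcon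
    have h1 : τ.max' hne + 1 ≤ g (τ.max' hne + 1) := hg.le_apply
    have h2 : g (τ.max' hne + 1) ≤ τ.max' hne := Finset.le_max' τ _ hcon
    omega
  set m := Nat.find hbdd with hm
  have hiff : ∀ t, g t ∈ τ ↔ t < m := by
    intro t
    constructor
    · intro ht
      by_contra hcon
      push_neg at hcon
      exact Nat.find_spec hbdd (hDC t m hcon ht)
    · intro ht
      by_contra hcon
      exact Nat.find_min hbdd ht hcon
  have hτ : τ = (Finset.range m).image g := by
    ext b
    simp only [Finset.mem_image, Finset.mem_range]
    constructor
    · intro hb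
      obtain ⟨t, rfl⟩ := h.1 hb
      exact ⟨t, (hiff t).mp hb, rfl⟩
    · rintro ⟨t, ht, rfl⟩
      exact (hiff t).mpr ht
  have hcard : τ.card = m := by
    rw [hτ, Finset.card_image_of_injective _ hg.injective, Finset.card_range]
  rw [hcard]
  refine (fun hp h1 h2 => List.Perm.eq_of_pairwise' (r := (· ≤ ·)) h1 h2 hp) ?_ ?_ ?_
  · rw [← Multiset.coe_eq_coe]
    have h1 : ((τ.sort (· ≤ ·) : List ℕ) : Multiset ℕ) = τ.1 := Finset.sort_eq _ _
    have h2 : τ.1 = (Finset.range m).1.map g := by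
      rw [hτ]
      exact Finset.image_val_of_injOn (hg.injective.injOn)
    rw [h1, h2, Finset.range_val]
    rfl
  · exact Finset.pairwise_sort _ _
  · rw [List.pairwise_map]
    exact (List.pairwise_lt_range (n := m)).imp (fun hab => (hg hab).le)

lemma sort_toFinset_eq {l : List ℕ} (hs : List.Pairwise (· < ·) l) :
    l.toFinset.sort (· ≤ ·) = l := by
  have hnd : l.Nodup := hs.nodup
  refine (fun hp h1 h2 => List.Perm.eq_of_pairwise' (r := (· ≤ ·)) h1 h2 hp) ?_ ?_ ?_
  · rw [← Multiset.coe_eq_coe]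
    have h1 : ((l.toFinset.sort (· ≤ ·) : List ℕ) : Multiset ℕ) = l.toFinset.1 :=
      Finset.sort_eq _ _
    rw [h1]
    simp [List.toFinset, Multiset.toFinset, Multiset.dedup_eq_self.mpr, hnd]
  · exact Finset.pairwise_sort _ _
  · exact hs.imp le_of_lt

end RosenthalNW

namespace RosenthalNW

variable {E : Type*} [NormedAddCommGroup E] [NormedSpace ℝ E]

/-- the alternating condition at rank `i`. -/
def cond (p q : ℝ) (f : E →L[ℝ] ℝ) (i : ℕ) (v : E) : Prop :=
  if Even i then q ≤ f v else f v ≤ p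

def sat (x : ℕ → E) (p q : ℝ) (f : E →L[ℝ] ℝ) (l : List ℕ) : Prop :=
  ∀ i (h : i < l.length), cond p q f i (x (l[i]'h))

/-- realizability of the alternating pattern on the sorted enumeration of `F`. -/
def Realz (x : ℕ → E) (p q : ℝ) (F : Finset ℕ) : Prop :=
  ∃ f : E →L[ℝ] ℝ, ‖f‖ ≤ 1 ∧ sat x p q f (F.sort (· ≤ ·))

/-- list builder for extracting independence from hereditary alternating realizability -/
def build (e : ℕ → ℕ) (ε : ℕ → Bool) : ℕ → List ℕ
  | 0 => if ε 0 then [e 1] else [e 0, e 1]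
  | (k+1) => build e ε k ++ (if ε (k+1) = decide (Even (build e ε k).length)
      then [e (2*(k+1)+1)] else [e (2*(k+1)), e (2*(k+1)+1)])

lemma build_zero (e : ℕ → ℕ) (ε : ℕ → Bool) :
    build e ε 0 = if ε 0 then [e 1] else [e 0, e 1] := rfl

lemma build_succ (e : ℕ → ℕ) (ε : ℕ → Bool) (k : ℕ) :
    build e ε (k+1) = build e ε k ++ (if ε (k+1) = decide (Even (build e ε k).length)
      then [e (2*(k+1)+1)] else [e (2*(k+1)), e (2*(k+1)+1)]) := rfl

lemma build_mem {e : ℕ → ℕ} {ε : ℕ → Bool} :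
    ∀ k, ∀ a ∈ build e ε k, ∃ j, j ≤ 2*k+1 ∧ a = e j := by
  intro k
  induction k with
  | zero =>
    intro a ha
    rw [build_zero] at ha
    by_cases h : ε 0 <;> simp [h] at ha
    · exact ⟨1, le_refl _, ha⟩
    · rcases ha with rfl | rfl
      · exact ⟨0, by omega, rfl⟩
      · exact ⟨1, le_refl _, rfl⟩
  | succ k ih =>
    intro a ha
    rw [build_succ, List.mem_append] at ha
    rcases ha with ha | ha
    · obtain ⟨j, hj, rfl⟩ := ih a ha
      exact ⟨j, by omega, rfl⟩
    · by_cases h : ε (k+1) = decide (Even (build e ε k).length) <;> simp [h] at ha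
      · exact ⟨2*(k+1)+1, le_refl _, ha⟩
      · rcases ha with rfl | rfl
        · exact ⟨2*(k+1), by omega, rfl⟩
        · exact ⟨2*(k+1)+1, le_refl _, rfl⟩

lemma build_sorted {e : ℕ → ℕ} (he : StrictMono e) (ε : ℕ → Bool) :
    ∀ k, List.Pairwise (· < ·) (build e ε k) := by
  intro k
  induction k with
  | zero =>
    rw [build_zero]
    by_cases h : ε 0 <;> simp [h]
    exact he (by omega)
  | succ k ih =>
    rw [build_succ, List.pairwise_append]
    have hcross : ∀ a ∈ build e ε k, ∀ j', 2*(k+1) ≤ j' → a < e j' := by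
      intro a ha j' hj'
      obtain ⟨j, hj, rfl⟩ := build_mem k a ha
      exact he (by omega)
    refine ⟨ih, ?_, ?_⟩
    · by_cases h : ε (k+1) = decide (Even (build e ε k).length) <;> simp [h]
      exact he (by omega)
    · intro a ha b hb
      by_cases h : ε (k+1) = decide (Even (build e ε k).length) <;> simp [h] at hb
      · subst hb; exact hcross a ha _ (by omega)
      · rcases hb with rfl | rfl
        · exact hcross a ha _ (by omega)
        · exact hcross a ha _ (by omega)

lemma build_pos {e : ℕ → ℕ} {ε : ℕ → Bool} :
    ∀ k, ∀ k' ≤ k, ∃ i, ∃ h : i < (build e ε k).length,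
      (build e ε k)[i]'h = e (2*k'+1) ∧ (Even i ↔ ε k' = true) := by
  intro k
  induction k with
  | zero =>
    intro k' hk'
    interval_cases k'
    by_cases h : ε 0
    · refine ⟨0, by rw [build_zero, if_pos h]; simp, ?_, ?_⟩
      · simp only [build_zero, if_pos h]
        simp
      · simp [h]
    · refine ⟨1, by rw [build_zero, if_neg h]; simp, ?_, ?_⟩
      · simp only [build_zero, if_neg h]
        simp
      · simp [h, Nat.even_add_one]
  | succ k ih =>
    intro k' hk'
    rcases Nat.lt_succ_iff_lt_or_eq.mp (Nat.lt_succ_of_le hk') with hlt | rfl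
    · obtain ⟨i, hi, hval, hpar⟩ := ih k' (by omega)
      have hlen : i < (build e ε (k+1)).length := by
        rw [build_succ, List.length_append]; omega
      refine ⟨i, hlen, ?_, hpar⟩
      simp only [build_succ]
      rw [List.getElem_append_left hi]
      exact hval
    · set L := build e ε k with hL
      by_cases h : ε (k+1) = decide (Even L.length)
      · have hb : build e ε (k+1) = L ++ [e (2*(k+1)+1)] := by
          rw [build_succ, ← hL, if_pos h]
        have hlen : L.length < (build e ε (k+1)).length := by
          rw [hb, List.length_append]; simp
        refine ⟨L.length, hlen, ?_, ?_⟩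
        · simp only [hb]
          rw [List.getElem_append_right (le_refl _)]
          simp
        · constructor
          · intro hev
            rw [h]; simpa using hev
          · intro hε
            rw [hε] at h
            simpa using h.symm
      · have hb : build e ε (k+1) = L ++ [e (2*(k+1)), e (2*(k+1)+1)] := by
          rw [build_succ, ← hL, if_neg h]
        have hlen : L.length + 1 < (build e ε (k+1)).length := by
          rw [hb, List.length_append]; simp
        refine ⟨L.length + 1, hlen, ?_, ?_⟩
        · simp only [hb]
          rw [List.getElem_append_right (by omega)]
          simp
        · have hnot : ε (k+1) = ! decide (Even L.length) := by
            cases hε : ε (k+1) <;> cases hl : decide (Even L.length) <;> rw [hε, hl] at h <;> simp_all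
          rw [Nat.even_add_one]
          constructor
          · intro hodd
            rw [hnot]
            simp only [Bool.not_eq_true', decide_eq_false_iff_not]
            exact hodd
          · intro hε
            rw [hε] at hnot
            have h2 := hnot.symm
            simp only [Bool.not_eq_true', true_eq_decide_iff] at *
            simp only [Bool.not_eq_true', decide_eq_false_iff_not] at h2
            exact h2

lemma indep_of_realz {x : ℕ → E} {p q : ℝ} {e : ℕ → ℕ} (he : StrictMono e)
    (hA : ∀ F : Finset ℕ, ↑F ⊆ Set.range e → Realz x p q F) (ε : ℕ → Bool) (K : ℕ) :
    ∃ f : E →L[ℝ] ℝ, ‖f‖ ≤ 1 ∧ ∀ k ≤ K,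
      if ε k then q ≤ f (x (e (2*k+1))) else f (x (e (2*k+1))) ≤ p := by
  classical
  set l := build e ε K with hl
  have hsort := build_sorted he ε K
  have hFsub : ↑l.toFinset ⊆ Set.range e := by
    intro a ha
    simp only [Finset.coe_sort_coe, List.coe_toFinset, Set.mem_setOf_eq] at ha
    obtain ⟨j, _, rfl⟩ := build_mem K a ha
    exact ⟨j, rfl⟩
  obtain ⟨f, hf1, hf2⟩ := hA l.toFinset hFsub
  rw [sort_toFinset_eq hsort] at hf2
  refine ⟨f, hf1, ?_⟩
  intro k hk
  obtain ⟨i, hi, hval, hpar⟩ := build_pos K k hk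
  have hcc := hf2 i hi
  rw [hval] at hcc
  unfold cond at hcc
  by_cases hε : ε k
  · rw [if_pos hε]
    rwa [if_pos (hpar.mpr hε)] at hcc
  · rw [if_neg hε]
    have hodd : ¬ Even i := fun hc => hε (hpar.mp hc)
    rwa [if_neg hodd] at hcc

lemma l1_branch {x : ℕ → E} {p q : ℝ} (hpq : p < q) {e : ℕ → ℕ} (he : StrictMono e)
    (hA : ∀ F : Finset ℕ, ↑F ⊆ Set.range e → Realz x p q F) :
    ∃ φ : ℕ → ℕ, StrictMono φ ∧ ∃ δ : ℝ, 0 < δ ∧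
      ∀ (n : ℕ) (a : ℕ → ℝ),
        δ * ∑ k ∈ Finset.range n, |a k| ≤ ‖∑ k ∈ Finset.range n, a k • x (φ k)‖ := by
  classical
  refine ⟨fun k => e (2*k+1), fun a b hab => he (by omega), (q - p)/2, by linarith, ?_⟩
  intro n a
  set ε : ℕ → Bool := fun k => decide (0 ≤ a k) with hε
  obtain ⟨fp, hfp1, hfp2⟩ := indep_of_realz he hA ε n
  obtain ⟨fm, hfm1, hfm2⟩ := indep_of_realz he hA (fun k => ! ε k) n
  set v := ∑ k ∈ Finset.range n, a k • x (e (2*k+1)) with hv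
  have hterm : ∀ k ∈ Finset.range n,
      (q - p) * |a k| ≤ a k * (fp (x (e (2*k+1))) - fm (x (e (2*k+1)))) := by
    intro k hk
    have hkn : k ≤ n := (Finset.mem_range.mp hk).le
    have hp2 := hfp2 k hkn
    have hm2 := hfm2 k hkn
    by_cases hak : 0 ≤ a k
    · have hεk : ε k = true := decide_eq_true hak
      rw [if_pos hεk] at hp2
      rw [hεk] at hm2
      simp only [Bool.not_true, Bool.false_eq_true, if_false] at hm2
      have hd : q - p ≤ fp (x (e (2*k+1))) - fm (x (e (2*k+1))) := by linarith
      calc (q - p) * |a k| = (q - p) * a k := by rw [abs_of_nonneg hak]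
        _ ≤ (fp (x (e (2*k+1))) - fm (x (e (2*k+1)))) * a k :=
            mul_le_mul_of_nonneg_right hd hak
        _ = a k * (fp (x (e (2*k+1))) - fm (x (e (2*k+1)))) := mul_comm _ _
    · push_neg at hak
      have hεk : ε k = false := decide_eq_false (not_le.mpr hak)
      rw [hεk] at hp2 hm2
      simp only [Bool.false_eq_true, if_false, Bool.not_false, if_true] at hp2 hm2
      have hd : fp (x (e (2*k+1))) - fm (x (e (2*k+1))) ≤ p - q := by linarith
      have h2 : a k * (p - q) ≤ a k * (fp (x (e (2*k+1))) - fm (x (e (2*k+1)))) :=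
        mul_le_mul_of_nonpos_left hd (le_of_lt hak)
      calc (q - p) * |a k| = a k * (p - q) := by rw [abs_of_neg hak]; ring
        _ ≤ a k * (fp (x (e (2*k+1))) - fm (x (e (2*k+1)))) := h2
  have hsum : (q - p) * (∑ k ∈ Finset.range n, |a k|) ≤ fp v - fm v := by
    have h1 : fp v = ∑ k ∈ Finset.range n, a k * fp (x (e (2*k+1))) := by
      rw [hv, map_sum]
      exact Finset.sum_congr rfl (fun k _ => by rw [map_smul]; rfl)
    have h2 : fm v = ∑ k ∈ Finset.range n, a k * fm (x (e (2*k+1))) := by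
      rw [hv, map_sum]
      exact Finset.sum_congr rfl (fun k _ => by rw [map_smul]; rfl)
    rw [h1, h2, ← Finset.sum_sub_distrib, Finset.mul_sum]
    refine Finset.sum_le_sum ?_
    intro k hk
    have := hterm k hk
    nlinarith [hterm k hk]
  have hbp : fp v ≤ ‖v‖ := by
    have h1 : ‖fp v‖ ≤ ‖fp‖ * ‖v‖ := fp.le_opNorm v
    have h2 : ‖fp‖ * ‖v‖ ≤ 1 * ‖v‖ := mul_le_mul_of_nonneg_right hfp1 (norm_nonneg v)
    have h3 : fp v ≤ ‖fp v‖ := le_abs_self _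
    simpa using h3.trans (h1.trans h2)
  have hbm : -(fm v) ≤ ‖v‖ := by
    have h1 : ‖fm v‖ ≤ ‖fm‖ * ‖v‖ := fm.le_opNorm v
    have h2 : ‖fm‖ * ‖v‖ ≤ 1 * ‖v‖ := mul_le_mul_of_nonneg_right hfm1 (norm_nonneg v)
    have h3 : -(fm v) ≤ ‖fm v‖ := neg_le_abs _
    simpa using h3.trans (h1.trans h2)
  linarith

end RosenthalNW

namespace RosenthalNW

variable {E : Type*} [NormedAddCommGroup E] [NormedSpace ℝ E]
variable (x : ℕ → E) (π : ℕ → ℚ × ℚ)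

def PropB (i : ℕ) (t : Set ℕ) : Prop :=
  ∀ Q : Set ℕ, Q ⊆ t → Q.Infinite →
    ∃ τ : Finset ℕ, IsInitSeg τ Q ∧ ¬ Realz x ((π i).1 : ℝ) ((π i).2 : ℝ) τ

def NoIndep : Prop :=
  ¬ ∃ p q : ℚ, ((p : ℝ) < (q : ℝ)) ∧ ∃ e : ℕ → ℕ, StrictMono e ∧
      ∀ F : Finset ℕ, ↑F ⊆ Set.range e → Realz x (p : ℝ) (q : ℝ) F

lemma stageStep (hmain : NoIndep x) (i : ℕ) (s : Set ℕ) (hs : s.Infinite) :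
    ∃ t : Set ℕ, t ⊆ s ∧ t.Infinite ∧ ((((π i).1 : ℝ) < ((π i).2 : ℝ)) → PropB x π i t) := by
  by_cases hpq : ((π i).1 : ℝ) < ((π i).2 : ℝ)
  · rcases nwOpen (fun F => ¬ Realz x ((π i).1 : ℝ) ((π i).2 : ℝ) F) s hs with
      ⟨N', h1, h2, h3⟩ | ⟨e, he, _, h3⟩
    · exact ⟨N', h1, h2, fun _ => h3⟩
    · exact absurd ⟨(π i).1, (π i).2, hpq, e, he, fun F hF => not_not.mp (h3 F hF)⟩ hmain
  · exact ⟨s, subset_refl s, hs, fun h => absurd h hpq⟩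

noncomputable def NSeq (hmain : NoIndep x) : ℕ → {s : Set ℕ // s.Infinite}
  | 0 => ⟨Set.univ, Set.infinite_univ⟩
  | (i+1) => ⟨(stageStep x π hmain i (NSeq hmain i).1 (NSeq hmain i).2).choose,
      (stageStep x π hmain i (NSeq hmain i).1 (NSeq hmain i).2).choose_spec.2.1⟩

noncomputable def diag (hmain : NoIndep x) : ℕ → ℕ
  | 0 => ((NSeq x π hmain 0).2.exists_gt 0).choose
  | (k+1) => ((NSeq x π hmain (k+1)).2.exists_gt (diag hmain k)).choose

variable {x π}
variable (hmain : NoIndep x)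

lemma NSeq_succ_sub (i : ℕ) : (NSeq x π hmain (i+1)).1 ⊆ (NSeq x π hmain i).1 :=
  (stageStep x π hmain i (NSeq x π hmain i).1 (NSeq x π hmain i).2).choose_spec.1

lemma NSeq_propB (i : ℕ) (hlt : ((π i).1 : ℝ) < ((π i).2 : ℝ)) :
    PropB x π i (NSeq x π hmain (i+1)).1 :=
  (stageStep x π hmain i (NSeq x π hmain i).1 (NSeq x π hmain i).2).choose_spec.2.2 hlt

lemma NSeq_chain {j i : ℕ} (h : j ≤ i) : (NSeq x π hmain i).1 ⊆ (NSeq x π hmain j).1 := by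
  induction i with
  | zero => simpa [Nat.le_zero.mp h] using subset_refl _
  | succ i ih =>
    rcases Nat.lt_or_ge j (i+1) with hlt | hge
    · exact (NSeq_succ_sub hmain i).trans (ih (Nat.lt_succ_iff.mp hlt))
    · have : j = i + 1 := le_antisymm h hge
      subst this; exact subset_refl _

lemma diag_zero : diag x π hmain 0 = ((NSeq x π hmain 0).2.exists_gt 0).choose := by
  rw [diag]

lemma diag_succ (k : ℕ) : diag x π hmain (k+1) =
    ((NSeq x π hmain (k+1)).2.exists_gt (diag x π hmain k)).choose := by
  rw [diag]

lemma diag_mem (k : ℕ) : diag x π hmain k ∈ (NSeq x π hmain k).1 := by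
  cases k with
  | zero =>
    rw [diag_zero]
    exact ((NSeq x π hmain 0).2.exists_gt 0).choose_spec.1
  | succ k =>
    rw [diag_succ]
    exact ((NSeq x π hmain (k+1)).2.exists_gt (diag x π hmain k)).choose_spec.1

lemma diag_strictMono : StrictMono (diag x π hmain) := by
  apply strictMono_nat_of_lt_succ
  intro k
  rw [diag_succ]
  exact ((NSeq x π hmain (k+1)).2.exists_gt (diag x π hmain k)).choose_spec.2

lemma diag_mem_of_le {j k : ℕ} (h : j ≤ k) : diag x π hmain k ∈ (NSeq x π hmain j).1 :=
  NSeq_chain hmain h (diag_mem hmain k)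

noncomputable def altSeq (U L : Set ℕ) (hU : U.Infinite) (hL : L.Infinite) : ℕ → ℕ
  | 0 => (hU.exists_gt 0).choose
  | (t+1) => if Even (t+1) then (hU.exists_gt (altSeq U L hU hL t)).choose
      else (hL.exists_gt (altSeq U L hU hL t)).choose

lemma altSeq_mem (U L : Set ℕ) (hU : U.Infinite) (hL : L.Infinite) (t : ℕ) :
    altSeq U L hU hL t ∈ (if Even t then U else L) := by
  cases t with
  | zero =>
    rw [if_pos (Even.zero)]
    exact (hU.exists_gt 0).choose_spec.1
  | succ t =>
    by_cases h : Even (t+1)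
    · rw [if_pos h]
      show (if Even (t+1) then (hU.exists_gt (altSeq U L hU hL t)).choose
        else (hL.exists_gt (altSeq U L hU hL t)).choose) ∈ U
      rw [if_pos h]
      exact (hU.exists_gt _).choose_spec.1
    · rw [if_neg h]
      show (if Even (t+1) then (hU.exists_gt (altSeq U L hU hL t)).choose
        else (hL.exists_gt (altSeq U L hU hL t)).choose) ∈ L
      rw [if_neg h]
      exact (hL.exists_gt _).choose_spec.1

lemma altSeq_strictMono (U L : Set ℕ) (hU : U.Infinite) (hL : L.Infinite) :
    StrictMono (altSeq U L hU hL) := by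
  apply strictMono_nat_of_lt_succ
  intro t
  show altSeq U L hU hL t < (if Even (t+1) then (hU.exists_gt (altSeq U L hU hL t)).choose
    else (hL.exists_gt (altSeq U L hU hL t)).choose)
  by_cases h : Even (t+1)
  · rw [if_pos h]; exact (hU.exists_gt _).choose_spec.2
  · rw [if_neg h]; exact (hL.exists_gt _).choose_spec.2

lemma conv_or_osc (u : ℕ → ℝ) (r : ℝ) (hb : ∀ n, |u n| ≤ r) :
    (∃ L, Tendsto u atTop (𝓝 L)) ∨
      ∃ p q : ℚ, ((p : ℝ) < (q : ℝ)) ∧ {n | u n < (p : ℝ)}.Infinite ∧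
        {n | (q : ℝ) < u n}.Infinite := by
  have hba : IsBoundedUnder (· ≤ ·) atTop u :=
    Filter.isBoundedUnder_of ⟨r, fun n => (abs_le.mp (hb n)).2⟩
  have hbb : IsBoundedUnder (· ≥ ·) atTop u :=
    Filter.isBoundedUnder_of ⟨-r, fun n => (abs_le.mp (hb n)).1⟩
  by_cases heq : liminf u atTop = limsup u atTop
  · left
    exact ⟨limsup u atTop, tendsto_of_liminf_eq_limsup heq rfl hba hbb⟩
  · right
    have hle : liminf u atTop ≤ limsup u atTop := liminf_le_limsup hba hbb
    have hlt : liminf u atTop < limsup u atTop := lt_of_le_of_ne hle heq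
    obtain ⟨p, hp1, hp2⟩ := exists_rat_btwn hlt
    obtain ⟨q, hq1, hq2⟩ := exists_rat_btwn hp2
    refine ⟨p, q, by exact_mod_cast hq1, ?_, ?_⟩
    · have := Filter.frequently_lt_of_liminf_lt (hu := hba.isCoboundedUnder_ge) hp1
      exact Nat.frequently_atTop_iff_infinite.mp this
    · have := Filter.frequently_lt_of_lt_limsup (hu := hbb.isCoboundedUnder_le) hq2
      exact Nat.frequently_atTop_iff_infinite.mp this

end RosenthalNW

open RosenthalNW in
/-- Rosenthal's ℓ¹ dichotomy: every bounded sequence in a Banach space `E`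
either has a weakly Cauchy subsequence, or has a subsequence equivalent to the
unit vector basis of `ℓ¹`. -/
theorem rosenthal_l1_dichotomy (E : Type*) [NormedAddCommGroup E] [NormedSpace ℝ E]
    [CompleteSpace E] (x : ℕ → E) (hbdd : ∃ r : ℝ, ∀ n, ‖x n‖ ≤ r) :
    (∃ φ : ℕ → ℕ, StrictMono φ ∧
        ∀ f : E →L[ℝ] ℝ, ∃ L : ℝ, Tendsto (fun n => f (x (φ n))) atTop (𝓝 L)) ∨
      (∃ φ : ℕ → ℕ, StrictMono φ ∧ ∃ δ : ℝ, 0 < δ ∧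
        ∀ (n : ℕ) (a : ℕ → ℝ),
          δ * ∑ k ∈ Finset.range n, |a k| ≤
            ‖∑ k ∈ Finset.range n, a k • x (φ k)‖) := by
  classical
  obtain ⟨r, hr⟩ := hbdd
  by_cases hmain : ∃ p q : ℚ, ((p : ℝ) < (q : ℝ)) ∧ ∃ e : ℕ → ℕ, StrictMono e ∧
      ∀ F : Finset ℕ, ↑F ⊆ Set.range e → Realz x (p : ℝ) (q : ℝ) F
  · right
    obtain ⟨p, q, hpq, e, he, hA⟩ := hmain
    exact l1_branch hpq he hA
  · left
    have hmain' : NoIndep x := hmain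
    obtain ⟨π, hπ⟩ := exists_surjective_nat (ℚ × ℚ)
    set d := diag x π hmain' with hd
    have hdmono : StrictMono d := diag_strictMono hmain'
    refine ⟨d, hdmono, ?_⟩
    have key : ∀ s : E →L[ℝ] ℝ, ‖s‖ ≤ 1 →
        ∃ L, Tendsto (fun k => s (x (d k))) atTop (𝓝 L) := by
      intro s hs
      set u : ℕ → ℝ := fun k => s (x (d k)) with hu
      have hub : ∀ k, |u k| ≤ r := by
        intro k
        have h1 : ‖s (x (d k))‖ ≤ ‖s‖ * ‖x (d k)‖ := s.le_opNorm _
        have h2 : ‖s‖ * ‖x (d k)‖ ≤ 1 * r :=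
          mul_le_mul hs (hr _) (norm_nonneg _) zero_le_one
        calc |u k| = ‖s (x (d k))‖ := (Real.norm_eq_abs _).symm
          _ ≤ 1 * r := h1.trans h2
          _ = r := one_mul r
      rcases conv_or_osc u r hub with h | ⟨p, q, hpq, hinfL, hinfU⟩
      · exact h
      · exfalso
        obtain ⟨i, hi⟩ := hπ (p, q)
        have hlt : ((π i).1 : ℝ) < ((π i).2 : ℝ) := by rw [hi]; exact hpq
        have hpb : PropB x π i (NSeq x π hmain' (i+1)).1 :=
          NSeq_propB hmain' i hlt
        set U : Set ℕ := d '' {k | i + 1 ≤ k ∧ (q : ℝ) < u k} with hU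
        set Lo : Set ℕ := d '' {k | i + 1 ≤ k ∧ u k < (p : ℝ)} with hLo
        have hUinf : U.Infinite := by
          apply Set.Infinite.image (hdmono.injective.injOn)
          have hset : {k | i + 1 ≤ k ∧ (q : ℝ) < u k} =
              {k | (q : ℝ) < u k} \ {k | k < i + 1} := by
            ext k
            simp only [Set.mem_setOf_eq, Set.mem_diff, not_lt]
            tauto
          rw [hset]
          exact hinfU.diff (Set.finite_lt_nat _)
        have hLoinf : Lo.Infinite := by
          apply Set.Infinite.image (hdmono.injective.injOn)
          have hset : {k | i + 1 ≤ k ∧ u k < (p : ℝ)} =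
              {k | u k < (p : ℝ)} \ {k | k < i + 1} := by
            ext k
            simp only [Set.mem_setOf_eq, Set.mem_diff, not_lt]
            tauto
          rw [hset]
          exact hinfL.diff (Set.finite_lt_nat _)
        have hUprop : ∀ m ∈ U, m ∈ (NSeq x π hmain' (i+1)).1 ∧ (q : ℝ) ≤ s (x m) := by
          rintro _ ⟨k, ⟨hk1, hk2⟩, rfl⟩
          exact ⟨diag_mem_of_le hmain' hk1, le_of_lt hk2⟩
        have hLoprop : ∀ m ∈ Lo, m ∈ (NSeq x π hmain' (i+1)).1 ∧ s (x m) ≤ (p : ℝ) := by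
          rintro _ ⟨k, ⟨hk1, hk2⟩, rfl⟩
          exact ⟨diag_mem_of_le hmain' hk1, le_of_lt hk2⟩
        set g := altSeq U Lo hUinf hLoinf with hg
        have hgmono : StrictMono g := altSeq_strictMono U Lo hUinf hLoinf
        have hQsub : Set.range g ⊆ (NSeq x π hmain' (i+1)).1 := by
          rintro _ ⟨t, rfl⟩
          have hmem := altSeq_mem U Lo hUinf hLoinf t
          by_cases ht : Even t
          · rw [if_pos ht] at hmem; exact (hUprop _ hmem).1
          · rw [if_neg ht] at hmem; exact (hLoprop _ hmem).1
        have hQinf : (Set.range g).Infinite :=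
          Set.infinite_range_of_injective hgmono.injective
        obtain ⟨τ, hτinit, hτbad⟩ := hpb (Set.range g) hQsub hQinf
        simp only [hi] at hτbad
        apply hτbad
        refine ⟨s, hs, ?_⟩
        rw [sort_initseg hgmono hτinit]
        intro j hj
        have hjlen : j < τ.card := by simpa using hj
        have hval : (List.map g (List.range τ.card))[j]'hj = g j := by simp
        rw [hval]
        have hmem := altSeq_mem U Lo hUinf hLoinf j
        unfold RosenthalNW.cond
        by_cases hjev : Even j
        · rw [if_pos hjev]
          rw [if_pos hjev] at hmem
          exact (hUprop _ hmem).2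
        · rw [if_neg hjev]
          rw [if_neg hjev] at hmem
          exact (hLoprop _ hmem).2
    intro f
    by_cases hf0 : f = 0
    · refine ⟨0, ?_⟩
      simp only [hf0, ContinuousLinearMap.zero_apply]
      exact tendsto_const_nhds
    · have hc : 0 < ‖f‖ := norm_pos_iff.mpr hf0
      set s : E →L[ℝ] ℝ := (‖f‖)⁻¹ • f with hsdef
      have hs1 : ‖s‖ ≤ 1 := by
        rw [hsdef]
        refine le_trans (ContinuousLinearMap.opNorm_smul_le _ _) ?_
        rw [norm_inv, norm_norm, inv_mul_cancel₀ (ne_of_gt hc)]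
      obtain ⟨L, hL⟩ := key s hs1
      refine ⟨‖f‖ * L, ?_⟩
      have heq : (fun n => f (x (d n))) = fun n => ‖f‖ * s (x (d n)) := by
        funext n
        rw [hsdef]
        simp only [ContinuousLinearMap.smul_apply, smul_eq_mul]
        field_simp
      rw [heq]
      exact hL.const_mul ‖f‖
end

section
/- Let U be a real normed space and let A ⊆ U be a bounded set whose weak closure is weakly compact. Then for every point x in the weak closure of A, there exists a sequence (x_n) of elements of A converging to x in the weak topology. -/
open Filter Topology

section Aux

variable {U : Type*} [NormedAddCommGroup U] [NormedSpace ℝ U]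

/-- Every continuous linear functional is continuous for the weak topology. -/
lemma weak_eval_continuous' (f : U →L[ℝ] ℝ) :
    Continuous fun v : WeakSpace ℝ U => f ((toWeakSpace ℝ U).symm v) :=
  WeakBilin.eval_continuous ((topDualPairing ℝ U).flip) f

/-- A finite `1/2`-norming set of unit functionals for a finite-dimensional subspace. -/
lemma norming_finset (s : Set U) (hs : s.Finite) :
    ∃ F : Finset (U →L[ℝ] ℝ), (∀ f ∈ F, ‖f‖ ≤ 1) ∧
      ∀ z ∈ Submodule.span ℝ s, ∃ f ∈ F, ‖z‖ ≤ 2 * |f z| := by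
  classical
  set E := Submodule.span ℝ s with hE
  haveI : FiniteDimensional ℝ E := FiniteDimensional.span_of_finite ℝ hs
  have key : ∀ z : E, ∃ g : U →L[ℝ] ℝ, ‖g‖ ≤ 1 ∧ (‖z‖ = 1 → g (z : U) = 1) := by
    intro z
    by_cases hz : ‖z‖ = 1
    · have hz0 : (z : U) ≠ 0 := by
        intro h
        have : ‖z‖ = 0 := by
          rw [show ‖z‖ = ‖(z : U)‖ from rfl, h, norm_zero]
        rw [this] at hz; norm_num at hz
      obtain ⟨g, hg1, hg2⟩ := exists_dual_vector ℝ (z : U) (norm_ne_zero_iff.2 hz0)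
      exact ⟨g, le_of_eq hg1, fun _ => by rw [hg2]; exact hz⟩
    · exact ⟨0, by simp, fun h => absurd h hz⟩
  choose g hg1 hg2 using key
  have hsph : IsCompact (Metric.sphere (0 : E) 1) := isCompact_sphere 0 1
  have hcover : Metric.sphere (0 : E) 1 ⊆ ⋃ z : E, {w : E | 1/2 < |g z (w : U)|} := by
    intro w hw
    have hw1 : ‖w‖ = 1 := by simpa using hw
    refine Set.mem_iUnion.2 ⟨w, ?_⟩
    simp only [Set.mem_setOf_eq, hg2 w hw1]
    norm_num
  have hopen : ∀ z : E, IsOpen {w : E | 1/2 < |g z (w : U)|} := by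
    intro z
    have hc : Continuous fun w : E => |g z (w : U)| :=
      ((g z).continuous.comp continuous_subtype_val).abs
    exact isOpen_lt continuous_const hc
  obtain ⟨t, ht⟩ := hsph.elim_finite_subcover _ hopen hcover
  refine ⟨insert 0 (t.image g), ?_, ?_⟩
  · intro f hf
    rcases Finset.mem_insert.1 hf with rfl | hf
    · simp
    · obtain ⟨z, -, rfl⟩ := Finset.mem_image.1 hf
      exact hg1 z
  · intro z hz
    by_cases hz0 : z = 0
    · exact ⟨0, Finset.mem_insert_self _ _, by simp [hz0]⟩
    · have hzn : (0 : ℝ) < ‖z‖ := norm_pos_iff.2 hz0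
      set w : E := ‖z‖⁻¹ • ⟨z, hz⟩ with hw
      have hw1 : ‖w‖ = 1 := by
        rw [hw, norm_smul]
        have : ‖(⟨z, hz⟩ : E)‖ = ‖z‖ := rfl
        rw [this]
        simp [abs_of_pos hzn, inv_mul_cancel₀ hzn.ne']
      have hwmem : w ∈ Metric.sphere (0 : E) 1 := by
        simpa using hw1
      obtain ⟨i, hi⟩ := Set.mem_iUnion₂.1 (ht hwmem)
      obtain ⟨hit, hiw⟩ := hi
      have hwc : (w : U) = ‖z‖⁻¹ • z := rfl
      have : 1/2 < |g i ((w : U))| := hiw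
      rw [hwc, map_smul] at this
      have habs : |g i (‖z‖⁻¹ • z)| = ‖z‖⁻¹ * |g i z| := by
        rw [show g i (‖z‖⁻¹ • z) = ‖z‖⁻¹ * g i z from by simp, abs_mul,
          abs_of_pos (inv_pos.2 hzn)]
      rw [show |(‖z‖⁻¹ • g i z : ℝ)| = ‖z‖⁻¹ * |g i z| from by
        rw [smul_eq_mul, abs_mul, abs_of_pos (inv_pos.2 hzn)]] at this
      refine ⟨g i, Finset.mem_insert_of_mem (Finset.mem_image_of_mem _ hit), ?_⟩
      have h2 : ‖z‖ * (1/2) < ‖z‖ * (‖z‖⁻¹ * |g i z|) := by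
        exact mul_lt_mul_of_pos_left this hzn
      rw [← mul_assoc, mul_inv_cancel₀ hzn.ne', one_mul] at h2
      linarith
/-- Points of the weak closure can be finitely approximated from `A`. -/
lemma exists_near (A : Set U) (x : WeakSpace ℝ U)
    (hx : x ∈ closure (toWeakSpace ℝ U '' A))
    (G : Finset (U →L[ℝ] ℝ)) {ε : ℝ} (hε : 0 < ε) :
    ∃ a ∈ A, ∀ f ∈ G, |f a - f ((toWeakSpace ℝ U).symm x)| < ε := by
  classical
  set x' := (toWeakSpace ℝ U).symm x with hx'
  set W : Set (WeakSpace ℝ U) :=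
    ⋂ f ∈ G, (fun v : WeakSpace ℝ U => f ((toWeakSpace ℝ U).symm v)) ⁻¹'
      (Metric.ball (f x') ε) with hW
  have hWopen : IsOpen W := by
    refine isOpen_biInter_finset fun f _ => ?_
    exact (weak_eval_continuous' f).isOpen_preimage _ Metric.isOpen_ball
  have hxW : x ∈ W := by
    simp only [hW, Set.mem_iInter, Set.mem_preimage, Metric.mem_ball]
    intro f _
    simpa [hx'] using hε
  obtain ⟨v, hvW, hvA⟩ := _root_.mem_closure_iff.1 hx W hWopen hxW
  obtain ⟨a, haA, rfl⟩ := hvA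
  refine ⟨a, haA, fun f hf => ?_⟩
  have := Set.mem_iInter₂.1 hvW f hf
  simp only [Set.mem_preimage, Metric.mem_ball, LinearEquiv.symm_apply_apply] at this
  rwa [Real.dist_eq] at this

end Aux

/-- Angelicity for the weak topology of a normed space: if `A` is a bounded
subset of a normed space `U` whose weak closure is weakly compact, then every
point of the weak closure of `A` is the weak limit of a sequence from `A`. -/
theorem weak_closure_point_is_weak_seq_limit
    (U : Type*) [NormedAddCommGroup U] [NormedSpace ℝ U] (A : Set U)
    (hbdd : ∃ r : ℝ, ∀ a ∈ A, ‖a‖ ≤ r)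
    (hcomp : IsCompact (closure (toWeakSpace ℝ U '' A))) :
    ∀ x ∈ closure (toWeakSpace ℝ U '' A),
      ∃ u : ℕ → U, (∀ n, u n ∈ A) ∧
        Tendsto (fun n => toWeakSpace ℝ U (u n)) atTop (𝓝 x) := by
  classical
  intro x hx
  set x' := (toWeakSpace ℝ U).symm x with hx'
  -- norming finsets attached to finite lists
  have hF : ∀ l : List U, ∃ F : Finset (U →L[ℝ] ℝ), (∀ f ∈ F, ‖f‖ ≤ 1) ∧
      ∀ z ∈ Submodule.span ℝ (insert x' {y | y ∈ l}), ∃ f ∈ F, ‖z‖ ≤ 2 * |f z| :=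
    fun l => norming_finset _ (l.finite_toSet.insert x')
  choose Fl hFl1 hFl2 using hF
  have hA : ∀ (G : Finset (U →L[ℝ] ℝ)) (n : ℕ), ∃ a ∈ A, ∀ f ∈ G,
      |f a - f x'| < 1/(n+1 : ℝ) :=
    fun G n => exists_near A x hx G (by positivity)
  choose pick hpickA hpick using hA
  -- recursive construction
  let Gof : List U → Finset (U →L[ℝ] ℝ) :=
    fun l => (Finset.range (l.length + 1)).biUnion fun i => Fl (l.take i)
  let s : ℕ → List U := fun n => Nat.rec [] (fun n l => l ++ [pick (Gof l) n]) n
  let a : ℕ → U := fun n => pick (Gof (s n)) n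
  have hs_succ : ∀ n, s (n + 1) = s n ++ [a n] := fun n => rfl
  have hlen : ∀ n, (s n).length = n := by
    intro n
    induction n with
    | zero => rfl
    | succ n ih => rw [hs_succ, List.length_append, ih]; rfl
  have htake : ∀ n m, n ≤ m → (s m).take n = s n := by
    intro n m h
    induction m with
    | zero => interval_cases n; rfl
    | succ m ih =>
      rcases Nat.lt_succ_iff_lt_or_eq.1 (Nat.lt_succ_of_le h) with h' | rfl
      · have hnm : n ≤ m := Nat.lt_succ_iff.1 h'
        rw [hs_succ, List.take_append_of_le_length (by rw [hlen]; exact hnm)]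
        exact ih hnm
      · exact List.take_of_length_le (hlen (m+1)).le
  have ha_mem : ∀ n, a n ∈ A := fun n => hpickA _ n
  have hkey : ∀ i n, i ≤ n → ∀ f ∈ Fl (s i), |f (a n) - f x'| < 1/(n+1 : ℝ) := by
    intro i n hin f hf
    refine hpick (Gof (s n)) n f (Finset.mem_biUnion.2 ⟨i, ?_, ?_⟩)
    · exact Finset.mem_range.2 (by rw [hlen]; omega)
    · rwa [htake i n hin]
  -- weak limits of functionals from the norming sets
  have hDlim : ∀ m, ∀ f ∈ Fl (s m), Tendsto (fun n => f (a n)) atTop (𝓝 (f x')) := by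
    intro m f hf
    have h1 : Tendsto (fun n : ℕ => 1/((n : ℝ)+1)) atTop (𝓝 0) :=
      tendsto_one_div_add_atTop_nhds_zero_nat
    have h0 : Tendsto (fun n => f (a n) - f x') atTop (𝓝 0) := by
      refine squeeze_zero_norm' ?_ h1
      filter_upwards [eventually_ge_atTop m] with n hn
      exact (hkey m n hn f hf).le
    have := h0.add (tendsto_const_nhds (x := f x'))
    simpa using this
  -- the separable subspace
  set S : Set U := insert x' (Set.range a) with hS
  set Y := Submodule.span ℝ S with hY
  have hsm : ∀ n, s n = (List.range n).map a := by
    intro n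
    induction n with
    | zero => rfl
    | succ n ih => rw [hs_succ, ih, List.range_succ, List.map_append]; rfl
  have hEn : ∀ w ∈ Y, ∃ n, w ∈ Submodule.span ℝ (insert x' {y | y ∈ s n}) := by
    intro w hw
    have hmono : Monotone fun n => Submodule.span ℝ (insert x' {y | y ∈ s n}) := by
      intro n m hnm
      refine Submodule.span_mono (Set.insert_subset_insert ?_)
      intro y hy
      have : y ∈ (s m).take n := by rwa [htake n m hnm]
      exact List.mem_of_mem_take this
    have hle : Y ≤ ⨆ n, Submodule.span ℝ (insert x' {y | y ∈ s n}) := by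
      rw [hY, Submodule.span_le]
      rintro y (rfl | ⟨i, rfl⟩)
      · exact Submodule.mem_iSup_of_mem 0
          (Submodule.subset_span (Set.mem_insert _ _))
      · refine Submodule.mem_iSup_of_mem (i + 1)
          (Submodule.subset_span (Set.mem_insert_of_mem _ ?_))
        show a i ∈ s (i + 1)
        rw [hsm (i+1)]
        exact List.mem_map_of_mem (f := a) (List.mem_range.2 (Nat.lt_succ_self i))
    exact (Submodule.mem_iSup_of_directed _ hmono.directed_le).1 (hle hw)
  -- conclusion via unique cluster point
  refine ⟨a, ha_mem, ?_⟩
  have hKmem : ∀ᶠ n in atTop, toWeakSpace ℝ U (a n) ∈ closure (toWeakSpace ℝ U '' A) :=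
    Eventually.of_forall fun n => subset_closure ⟨a n, ha_mem n, rfl⟩
  refine hcomp.tendsto_nhds_of_unique_mapClusterPt hKmem ?_
  intro y hy hcl
  set y' := (toWeakSpace ℝ U).symm y with hy'
  -- functionals agree on y' and x'
  have hfy : ∀ m, ∀ f ∈ Fl (s m), f y' = f x' := by
    intro m f hf
    have hcont : ContinuousAt (fun v : WeakSpace ℝ U => f ((toWeakSpace ℝ U).symm v)) y :=
      (weak_eval_continuous' f).continuousAt
    have h1 := hcl.continuousAt_comp hcont
    have h2 : MapClusterPt (f y') atTop (fun n => f (a n)) := by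
      exact h1
    have h3 : ClusterPt (f y') (map (fun n => f (a n)) atTop) := h2.clusterPt
    have h4 : map (fun n => f (a n)) atTop ≤ 𝓝 (f x') := hDlim m f hf
    exact eq_of_nhds_neBot (h3.mono h4)
  -- y' lies in the closure of Y
  have hyY : y' ∈ closure (Y : Set U) := by
    have h2 : y ∈ closure (toWeakSpace ℝ U '' Set.range a) := by
      refine mem_closure_iff_clusterPt.2 (hcl.clusterPt.mono ?_)
      refine le_principal_iff.2 (mem_map.2 (Eventually.of_forall fun n => ?_))
      exact ⟨a n, Set.mem_range_self n, rfl⟩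
    have h3 : y ∈ closure (toWeakSpace ℝ U '' (Y : Set U)) := by
      refine closure_mono (Set.image_mono ?_) h2
      exact fun z hz => Submodule.subset_span (Set.mem_insert_of_mem _ hz)
    rw [← Y.convex.toWeakSpace_closure ℝ] at h3
    obtain ⟨z, hz, hzy⟩ := h3
    have : y' = z := by rw [hy', ← hzy, LinearEquiv.symm_apply_apply]
    rwa [this]
  have hxY : x' ∈ closure (Y : Set U) :=
    subset_closure (Submodule.subset_span (Set.mem_insert _ _))
  -- the difference vanishes
  have hzero : y' - x' = 0 := by
    set z := y' - x' with hz
    have hzY : z ∈ closure (Y : Set U) := by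
      have h1 : y' ∈ Y.topologicalClosure := by
        rwa [← SetLike.mem_coe, Submodule.topologicalClosure_coe]
      have h2 : x' ∈ Y.topologicalClosure := by
        rwa [← SetLike.mem_coe, Submodule.topologicalClosure_coe]
      have := Y.topologicalClosure.sub_mem h1 h2
      rwa [← SetLike.mem_coe, Submodule.topologicalClosure_coe] at this
    have hsmall : ∀ ε : ℝ, 0 < ε → ‖z‖ ≤ 3 * ε := by
      intro ε hε
      obtain ⟨w, hwY, hwz⟩ := Metric.mem_closure_iff.1 hzY ε hε
      obtain ⟨n, hn⟩ := hEn w hwY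
      obtain ⟨f, hfF, hfw⟩ := hFl2 (s n) w hn
      have hfz : f z = 0 := by
        rw [hz, map_sub, hfy n f hfF, sub_self]
      have hdist : ‖z - w‖ < ε := by rwa [← dist_eq_norm]
      have hfwz : |f w| ≤ ε := by
        have : f w = f (w - z) := by rw [map_sub, hfz, sub_zero]
        rw [this]
        calc |f (w - z)| ≤ ‖f‖ * ‖w - z‖ := (f.le_opNorm _)
          _ ≤ 1 * ‖w - z‖ := by
              exact mul_le_mul_of_nonneg_right (hFl1 (s n) f hfF) (norm_nonneg _)
          _ = ‖z - w‖ := by rw [one_mul, norm_sub_rev]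
          _ ≤ ε := hdist.le
      calc ‖z‖ ≤ ‖z - w‖ + ‖w‖ := by simpa using norm_add_le (z - w) w
        _ ≤ ε + 2 * |f w| := add_le_add hdist.le hfw
        _ ≤ ε + 2 * ε := by linarith
        _ = 3 * ε := by ring
    have hn0 : ‖z‖ ≤ 0 := by
      by_contra h
      push_neg at h
      have := hsmall (‖z‖ / 4) (by linarith)
      linarith
    have := le_antisymm hn0 (norm_nonneg z)
    exact norm_eq_zero.1 this
  have hyx : y' = x' := by rwa [sub_eq_zero] at hzero
  rw [hy', hx'] at hyx
  calc y = toWeakSpace ℝ U ((toWeakSpace ℝ U).symm y) := by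
        rw [LinearEquiv.apply_symm_apply]
    _ = x := by rw [hyx, LinearEquiv.apply_symm_apply]
end
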